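/- Let A → B be a flat local homomorphism of Noetherian local rings, F• a bounded-above complex of finitely generated free B-modules, and k ∈ ℤ. Suppose that the truncated complex (… → F^{k-1} → F^k → F^k/∂F^{k-1} → 0) becomes exact after tensoring with A/m_A over A, and that (F^k/∂F^{k-1}) ⊗_A A/m_A is a free B/m_A B-module. Then for all n ≥ 1 the complex tensored with A/m_A^n is exact and (F^k/∂F^{k-1}) ⊗_A A/m_A^n is a free B/m_A^n B-module; consequently the original truncated complex is exact and F^k/∂F^{k-1} is a free B-module. -/

import Mathlib

open IsLocalRing

/-- Reduction of a linear map modulo an ideal: the induced map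
`M/IM → N/IN`. -/
noncomputable def idealRed {B M N : Type*} [CommRing B] [AddCommGroup M] [Module B M]
    [AddCommGroup N] [Module B N] (I : Ideal B) (f : M →ₗ[B] N) :
    (M ⧸ (I • ⊤ : Submodule B M)) →ₗ[B] (N ⧸ (I • ⊤ : Submodule B N)) :=
  Submodule.mapQ _ _ f (by
    refine Submodule.smul_le.2 fun r hr m _ => ?_
    refine Submodule.mem_comap.2 ?_
    rw [map_smul]
    exact Submodule.smul_mem_smul hr Submodule.mem_top)

section Helpers

variable {B : Type*} [CommRing B]
variable {M N P : Type*} [AddCommGroup M] [Module B M] [AddCommGroup N] [Module B N]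
  [AddCommGroup P] [Module B P]

lemma mem_smulTop_map (I : Ideal B) (f : M →ₗ[B] N) {x : M}
    (hx : x ∈ (I • ⊤ : Submodule B M)) : f x ∈ (I • ⊤ : Submodule B N) := by
  have : f x ∈ Submodule.map f (I • ⊤ : Submodule B M) := ⟨x, hx, rfl⟩
  rw [Submodule.map_smul''] at this
  exact Submodule.smul_mono le_rfl le_top this

lemma apply_mem_smulTop_mul (f : M →ₗ[B] N) {I K : Ideal B}
    (hf : ∀ x, f x ∈ (K • ⊤ : Submodule B N)) {x : M}
    (hx : x ∈ (I • ⊤ : Submodule B M)) : f x ∈ ((I * K) • ⊤ : Submodule B N) := by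
  have h1 : f x ∈ Submodule.map f (I • ⊤ : Submodule B M) := ⟨x, hx, rfl⟩
  rw [Submodule.map_smul''] at h1
  have h2 : Submodule.map f ⊤ ≤ (K • ⊤ : Submodule B N) := by
    rintro _ ⟨y, -, rfl⟩; exact hf y
  have := Submodule.smul_mono (le_refl I) h2 h1
  rwa [← Submodule.smul_assoc, Ideal.smul_eq_mul] at this

lemma idealRed_mk (I : Ideal B) (f : M →ₗ[B] N) (x : M) :
    idealRed I f (Submodule.Quotient.mk x) = Submodule.Quotient.mk (f x) := by
  simp [idealRed, Submodule.mapQ_apply]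

lemma idealRed_exact_iff (I : Ideal B) (f : M →ₗ[B] N) (g : N →ₗ[B] P) :
    Function.Exact (idealRed I f) (idealRed I g) ↔
      ∀ x : N, g x ∈ (I • ⊤ : Submodule B P) ↔
        x ∈ LinearMap.range f ⊔ (I • ⊤ : Submodule B N) := by
  constructor
  · intro h x
    have := h (Submodule.Quotient.mk x)
    rw [idealRed_mk, Submodule.Quotient.mk_eq_zero] at this
    rw [this]
    constructor
    · rintro ⟨y, hy⟩
      obtain ⟨z, rfl⟩ := Submodule.Quotient.mk_surjective _ y
      rw [idealRed_mk] at hy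
      rw [Submodule.Quotient.eq] at hy
      have hy' : x - f z ∈ (I • ⊤ : Submodule B N) := by
        simpa [neg_sub] using Submodule.neg_mem _ hy
      exact Submodule.mem_sup.2 ⟨f z, ⟨z, rfl⟩, x - f z, hy', by abel⟩
    · intro hx
      obtain ⟨y, ⟨z, rfl⟩, u, hu, rfl⟩ := Submodule.mem_sup.1 hx
      refine ⟨Submodule.Quotient.mk z, ?_⟩
      rw [idealRed_mk, Submodule.Quotient.eq]
      simpa using Submodule.neg_mem _ hu
  · intro h y
    obtain ⟨x, rfl⟩ := Submodule.Quotient.mk_surjective _ y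
    rw [idealRed_mk, Submodule.Quotient.mk_eq_zero, h x]
    constructor
    · intro hx
      obtain ⟨yy, ⟨z, rfl⟩, u, hu, rfl⟩ := Submodule.mem_sup.1 hx
      refine ⟨Submodule.Quotient.mk z, ?_⟩
      rw [idealRed_mk, Submodule.Quotient.eq]
      simpa using Submodule.neg_mem _ hu
    · rintro ⟨yy, hy⟩
      obtain ⟨z, rfl⟩ := Submodule.Quotient.mk_surjective _ yy
      rw [idealRed_mk, Submodule.Quotient.eq] at hy
      have hy' : x - f z ∈ (I • ⊤ : Submodule B N) := by
        simpa [neg_sub] using Submodule.neg_mem _ hy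
      exact Submodule.mem_sup.2 ⟨f z, ⟨z, rfl⟩, x - f z, hy', by abel⟩

lemma mem_smulTop_pi_iff {ι : Type*} [Fintype ι] [DecidableEq ι] (I : Ideal B) (v : ι → B) :
    v ∈ (I • ⊤ : Submodule B (ι → B)) ↔ ∀ i, v i ∈ I := by
  constructor
  · intro h i
    refine Submodule.smul_induction_on h (fun r hr n _ => ?_) (fun a b ha hb => ?_)
    · exact I.mul_mem_right _ hr
    · exact I.add_mem ha hb
  · intro h
    have hv : v = ∑ i, (v i) • (Pi.single i (1 : B) : ι → B) := by
      rw [← Finset.univ_sum_single v]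
      congr 1
      ext i j
      simp [Pi.single_apply, mul_comm]
    rw [hv]
    exact Submodule.sum_mem _ fun i _ => Submodule.smul_mem_smul (h i) Submodule.mem_top

lemma mkQ_mem_smulTop_iff (I : Ideal B) (N : Submodule B M) (z : M) :
    N.mkQ z ∈ (I • ⊤ : Submodule B (M ⧸ N)) ↔ z ∈ N ⊔ (I • ⊤ : Submodule B M) := by
  have h1 : (I • ⊤ : Submodule B (M ⧸ N)) = Submodule.map N.mkQ (I • ⊤ : Submodule B M) := by
    rw [Submodule.map_smul'', Submodule.map_top, Submodule.range_mkQ]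
  rw [h1]
  constructor
  · intro h
    have : z ∈ Submodule.comap N.mkQ (Submodule.map N.mkQ (I • ⊤ : Submodule B M)) := h
    rw [Submodule.comap_map_eq, Submodule.ker_mkQ] at this
    rwa [sup_comm] at this
  · intro h
    obtain ⟨y, hy, u, hu, rfl⟩ := Submodule.mem_sup.1 h
    rw [map_add]
    have : N.mkQ y = 0 := (Submodule.Quotient.mk_eq_zero _).2 hy
    rw [this, zero_add]
    exact ⟨u, hu, rfl⟩

end Helpers

section Homotopy

variable {B : Type*} [CommRing B]

lemma exists_approx_lift {M N : Type*} [AddCommGroup M] [Module B M] [Module.Free B M]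
    [AddCommGroup N] [Module B N] (f : N →ₗ[B] M) (c : M →ₗ[B] M) (K : Submodule B M)
    (h : ∀ x, c x ∈ LinearMap.range f ⊔ K) : ∃ g : M →ₗ[B] N, ∀ x, f (g x) - c x ∈ K := by
  classical
  let b := Module.Free.chooseBasis B M
  have hex : ∀ i, ∃ n : N, f n - c (b i) ∈ K := by
    intro i
    obtain ⟨y, ⟨n, rfl⟩, u, hu, hyu⟩ := Submodule.mem_sup.1 (h (b i))
    refine ⟨n, ?_⟩
    have : f n - c (b i) = -u := by rw [← hyu]; abel
    rw [this]; exact K.neg_mem hu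
  choose z hz using hex
  refine ⟨b.constr ℕ z, ?_⟩
  intro x
  set L : M →ₗ[B] M := f.comp (b.constr ℕ z) - c with hL
  have hbasis : ∀ i, L (b i) ∈ K := by
    intro i
    simpa [L, Module.Basis.constr_basis] using hz i
  have hx : x ∈ Submodule.span B (Set.range b) := by rw [b.span_eq]; trivial
  have : L x ∈ K := by
    refine Submodule.span_induction ?_ ?_ ?_ ?_ hx
    · rintro _ ⟨i, rfl⟩; exact hbasis i
    · simp
    · intro a b _ _ ha hb; rw [map_add]; exact K.add_mem ha hb
    · intro r m _ hm; rw [map_smul]; exact K.smul_mem r hm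
  simpa [L] using this

variable (J : Ideal B)
variable (F : ℤ → Type*) [∀ i, AddCommGroup (F i)] [∀ i, Module B (F i)]
  [∀ i, Module.Free B (F i)]
variable (d : ∀ i : ℤ, F i →ₗ[B] F (i + 1)) (k : ℤ)
variable (T : F (k + 1) →ₗ[B] F (k + 1))

/-- Descending construction of an approximate contracting homotopy. -/
noncomputable def homAux
    (hdd : ∀ i, (d (i + 1)).comp (d i) = 0)
    (hex : ∀ j, j < k → ∀ x : F (j + 1),
      d (j + 1) x ∈ (J • ⊤ : Submodule B (F (j + 1 + 1))) →
      x ∈ LinearMap.range (d j) ⊔ (J • ⊤ : Submodule B (F (j + 1))))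
    (hT1 : ∀ x : F (k + 1), x - T x ∈ LinearMap.range (d k) ⊔ (J • ⊤ : Submodule B (F (k + 1))))
    (hT2 : ∀ y : F k, T (d k y) ∈ (J • ⊤ : Submodule B (F (k + 1)))) :
    ∀ (j : ℤ), j ≤ k →
    Σ' (g : F (j + 1) →ₗ[B] F j) (R : F (j + 1) →ₗ[B] F (j + 1)),
      (∀ x : F (j + 1), d j (g x) + R x - x ∈ (J • ⊤ : Submodule B (F (j + 1)))) ∧
      (∀ y : F j, R (d j y) ∈ (J • ⊤ : Submodule B (F (j + 1)))) ∧
      (j < k → ∀ (c : ℕ) (x : F (j + 1)),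
        d (j + 1) x ∈ (J ^ c • ⊤ : Submodule B (F (j + 1 + 1))) →
        R x ∈ (J ^ c • ⊤ : Submodule B (F (j + 1)))) := fun j hj =>
  if hjk : k ≤ j then by
    have hkj : j = k := le_antisymm hj hjk
    subst hkj
    have hc : ∀ x : F (j + 1), ((LinearMap.id : F (j + 1) →ₗ[B] F (j + 1)) - T) x ∈
        LinearMap.range (d j) ⊔ (J • ⊤ : Submodule B (F (j + 1))) := by
      intro x; simpa using hT1 x
    have hgex := exists_approx_lift (d j) ((LinearMap.id : F (j + 1) →ₗ[B] F (j + 1)) - T) _ hc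
    refine ⟨hgex.choose, T, fun x => ?_, hT2, fun h => absurd h (lt_irrefl j)⟩
    have h := hgex.choose_spec x
    have heq : d j (hgex.choose x) + T x - x = d j (hgex.choose x) -
        (((LinearMap.id : F (j + 1) →ₗ[B] F (j + 1)) - T) x) := by
      simp only [LinearMap.sub_apply, LinearMap.id_apply]; abel
    rw [heq]; exact h
  else by
    have hjk' : j < k := lt_of_le_of_ne hj (fun h => hjk (le_of_eq h.symm))
    obtain ⟨g', R', p1', p2', _⟩ := homAux hdd hex hT1 hT2 (j + 1) (by omega)
    set R : F (j + 1) →ₗ[B] F (j + 1) := g' ∘ₗ d (j + 1) with hR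
    have hc : ∀ x : F (j + 1), ((LinearMap.id : F (j + 1) →ₗ[B] F (j + 1)) - R) x ∈
        LinearMap.range (d j) ⊔ (J • ⊤ : Submodule B (F (j + 1))) := by
      intro x
      refine hex j hjk' _ ?_
      have hxx : d (j + 1) (((LinearMap.id : F (j + 1) →ₗ[B] F (j + 1)) - R) x) =
          R' (d (j + 1) x) - (d (j + 1) (g' (d (j + 1) x)) + R' (d (j + 1) x) - d (j + 1) x) := by
        simp [R]; abel
      rw [hxx]
      exact Submodule.sub_mem _ (p2' x) (p1' (d (j + 1) x))
    have hgex := exists_approx_lift (d j) ((LinearMap.id : F (j + 1) →ₗ[B] F (j + 1)) - R) _ hc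
    refine ⟨hgex.choose, R, fun x => ?_, ?_, ?_⟩
    · have h := hgex.choose_spec x
      have heq : d j (hgex.choose x) + R x - x = d j (hgex.choose x) -
          (((LinearMap.id : F (j + 1) →ₗ[B] F (j + 1)) - R) x) := by
        simp only [LinearMap.sub_apply, LinearMap.id_apply]; abel
      rw [heq]; exact h
    · intro y
      have : R (d j y) = g' ((d (j + 1)).comp (d j) y) := rfl
      rw [this, hdd j]
      simp
    · intro _ c x hx
      exact mem_smulTop_map (J ^ c) g' hx
  termination_by j _ => (k - j).toNat
  decreasing_by omega

end Homotopy

section Cast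

variable (B : Type*) [CommRing B] (F : ℤ → Type*) [∀ i, AddCommGroup (F i)] [∀ i, Module B (F i)]

noncomputable def fcast {i j : ℤ} (h : i = j) : F i ≃ₗ[B] F j := by
  subst h; exact LinearEquiv.refl B (F i)

lemma fcast_d (d : ∀ i : ℤ, F i →ₗ[B] F (i + 1)) {i j : ℤ} (h : i = j) (x : F i) :
    d j (fcast B F h x) = fcast B F (by rw [h]) (d i x) := by
  subst h; rfl

lemma fcast_mem_smulTop (I : Ideal B) {i j : ℤ} (h : i = j) {x : F i}
    (hx : x ∈ (I • ⊤ : Submodule B (F i))) :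
    fcast B F h x ∈ (I • ⊤ : Submodule B (F j)) := by
  subst h; exact hx

lemma fcast_symm_mem_smulTop (I : Ideal B) {i j : ℤ} (h : i = j) {x : F j}
    (hx : x ∈ (I • ⊤ : Submodule B (F j))) :
    (fcast B F h).symm x ∈ (I • ⊤ : Submodule B (F i)) := by
  subst h; exact hx

end Cast

section Upgrade

/-- Transfer freeness along a bijective `R`-linear map between `R ⧸ I`-modules on which the
two scalar actions agree. -/
lemma free_of_bijective_of_mk_smul {R : Type*} [CommRing R] (I : Ideal R) {M N : Type*}
    [AddCommGroup M] [Module R M] [AddCommGroup N] [Module R N]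
    [Module (R ⧸ I) M] [Module (R ⧸ I) N]
    (hM : ∀ (r : R) (x : M), (Ideal.Quotient.mk I r) • x = r • x)
    (hN : ∀ (r : R) (x : N), (Ideal.Quotient.mk I r) • x = r • x)
    (f : M →ₗ[R] N) (hf : Function.Bijective f) [Module.Free (R ⧸ I) M] :
    Module.Free (R ⧸ I) N := by
  let e0 : M ≃ₗ[R] N := LinearEquiv.ofBijective f hf
  let e1 : M ≃ₗ[R ⧸ I] N :=
    { toFun := f
      invFun := e0.symm
      map_add' := f.map_add
      left_inv := e0.left_inv
      right_inv := e0.right_inv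
      map_smul' := by
        intro c x
        obtain ⟨r, rfl⟩ := Ideal.Quotient.mk_surjective c
        simp only [RingHom.id_apply]
        rw [hM, hN]
        exact f.map_smul r x }
  exact Module.Free.of_equiv e1

end Upgrade

section Krull

open IsLocalRing

lemma krull_fg {B : Type*} [CommRing B] [IsNoetherianRing B] [IsLocalRing B]
    {M : Type*} [AddCommGroup M] [Module B M] [Module.Finite B M] (x : M)
    (h : ∀ n : ℕ, x ∈ ((maximalIdeal B) ^ n • ⊤ : Submodule B M)) : x = 0 := by
  obtain ⟨m, p, hp⟩ := Module.Finite.exists_fin' B M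
  let E := p.quotKerEquivOfSurjective hp
  set x' := E.symm x with hx'
  have h' : ∀ n : ℕ, x' ∈ ((maximalIdeal B) ^ n • ⊤ :
      Submodule B ((Fin m → B) ⧸ LinearMap.ker p)) :=
    fun n => mem_smulTop_map _ (E.symm : M →ₗ[B] ((Fin m → B) ⧸ LinearMap.ker p)) (h n)
  have hbot := (maximalIdeal B).iInf_pow_smul_eq_bot_of_isLocalRing
    (M := (Fin m → B) ⧸ LinearMap.ker p)
    (Ideal.IsMaximal.ne_top (maximalIdeal.isMaximal B))
  have hx0 : x' = 0 := by
    rw [← Submodule.mem_bot (R := B), ← hbot]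
    exact Submodule.mem_iInf _ |>.2 h'
  have := congrArg E hx0
  rwa [LinearEquiv.apply_symm_apply, map_zero] at this

lemma mem_of_forall_mem_sup_smulTop {B : Type*} [CommRing B] [IsNoetherianRing B]
    [IsLocalRing B] {M : Type*} [AddCommGroup M] [Module B M] [Module.Finite B M]
    {J : Ideal B} (hJ : J ≤ maximalIdeal B) (N : Submodule B M) (x : M)
    (h : ∀ n : ℕ, 1 ≤ n → x ∈ N ⊔ (J ^ n • ⊤ : Submodule B M)) : x ∈ N := by
  have hmem : ∀ n : ℕ, N.mkQ x ∈ ((maximalIdeal B) ^ n • ⊤ : Submodule B (M ⧸ N)) := by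
    intro n
    rcases n with _ | n
    · rw [pow_zero, Ideal.one_eq_top, Submodule.top_smul]; trivial
    · obtain ⟨y, hy, u, hu, hxy⟩ := Submodule.mem_sup.1 (h (n + 1) (by omega))
      have h0 : N.mkQ x = N.mkQ u := by
        have hy0 : N.mkQ y = 0 := (Submodule.Quotient.mk_eq_zero N).2 hy
        rw [← hxy, map_add, hy0, zero_add]
      rw [h0]
      have h1 : N.mkQ u ∈ (J ^ (n + 1) • ⊤ : Submodule B (M ⧸ N)) :=
        mem_smulTop_map _ N.mkQ hu
      exact Submodule.smul_mono_left (Ideal.pow_right_mono hJ (n + 1)) h1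
  have hx0 : N.mkQ x = 0 := krull_fg _ hmem
  rwa [Submodule.mkQ_apply, Submodule.Quotient.mk_eq_zero] at hx0

end Krull

set_option maxHeartbeats 2000000 in
/-- Let `A → B` be a flat local homomorphism of Noetherian local rings and `F•` a
bounded-above complex of finitely generated free `B`-modules.  If the truncated complex
`⋯ → F^k → F^{k+1} → F^{k+1}/∂F^k → 0` becomes exact modulo `m_A` with
`(F^{k+1}/∂F^k) ⊗ A/m_A` free over `B/m_A B`, then for all `n ≥ 1` the complex reduced
modulo `m_A^n` is exact with `(F^{k+1}/∂F^k) ⊗ A/m_A^n` free over `B/m_A^n B`, and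
consequently the original truncated complex is exact and `F^{k+1}/∂F^k` is a free
`B`-module. -/
theorem stmt_8 (A B : Type*) [CommRing A] [CommRing B] [Algebra A B]
    [IsNoetherianRing A] [IsNoetherianRing B] [IsLocalRing A] [IsLocalRing B]
    [Module.Flat A B] [IsLocalHom (algebraMap A B)]
    (F : ℤ → Type*) [∀ i, AddCommGroup (F i)] [∀ i, Module B (F i)]
    [∀ i, Module.Free B (F i)] [∀ i, Module.Finite B (F i)]
    (hbd : ∃ N : ℤ, ∀ i, N < i → Subsingleton (F i))
    (d : ∀ i : ℤ, F i →ₗ[B] F (i + 1)) (hdd : ∀ i, (d (i + 1)).comp (d i) = 0)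
    (k : ℤ)
    -- the ideals `m_A^n·B`
    (I : ℕ → Ideal B)
    (hI : ∀ n, I n = Ideal.map (algebraMap A B) ((maximalIdeal A) ^ n))
    -- hypothesis: the truncated complex is exact mod `m_A` and the reduction of the
    -- cokernel is free over `B/m_A B`
    (h1 : ∀ j : ℤ, j < k → Function.Exact (idealRed (I 1) (d j)) (idealRed (I 1) (d (j + 1))))
    (h2 : Function.Exact (idealRed (I 1) (d k))
      (idealRed (I 1) (LinearMap.range (d k)).mkQ))
    (h3 : Module.Free (B ⧸ I 1)
      ((F (k + 1) ⧸ LinearMap.range (d k)) ⧸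
        ((I 1) • (⊤ : Submodule B (F (k + 1) ⧸ LinearMap.range (d k)))))) :
    (∀ n : ℕ, 1 ≤ n →
      (∀ j : ℤ, j < k →
        Function.Exact (idealRed (I n) (d j)) (idealRed (I n) (d (j + 1)))) ∧
      Function.Exact (idealRed (I n) (d k))
        (idealRed (I n) (LinearMap.range (d k)).mkQ) ∧
      Module.Free (B ⧸ I n)
        ((F (k + 1) ⧸ LinearMap.range (d k)) ⧸
          ((I n) • (⊤ : Submodule B (F (k + 1) ⧸ LinearMap.range (d k)))))) ∧
    (∀ j : ℤ, j < k → Function.Exact (d j) (d (j + 1))) ∧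
    Function.Exact (d k) (LinearMap.range (d k)).mkQ ∧
    Module.Free B (F (k + 1) ⧸ LinearMap.range (d k)) := by
    classical
  clear h2 hbd
  set J : Ideal B := Ideal.map (algebraMap A B) (maximalIdeal A) with hJdef
  have hIn : ∀ n : ℕ, I n = J ^ n := fun n => by rw [hI n, Ideal.map_pow]
  have hI1 : I 1 = J := by rw [hIn 1, pow_one]
  rw [hI1] at h1 h3
  have hJm : J ≤ maximalIdeal B := by
    rw [hJdef, Ideal.map_le_iff_le_comap]
    intro a ha
    rw [Ideal.mem_comap, mem_maximalIdeal, mem_nonunits_iff]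
    intro hu
    rw [mem_maximalIdeal, mem_nonunits_iff] at ha
    exact ha (IsLocalHom.map_nonunit a hu)
  -- elementwise form of the mod-`J` exactness
  have hE1 : ∀ j, j < k → ∀ x : F (j + 1),
      d (j + 1) x ∈ (J • ⊤ : Submodule B (F (j + 1 + 1))) →
      x ∈ LinearMap.range (d j) ⊔ (J • ⊤ : Submodule B (F (j + 1))) := by
    intro j hj x hx
    exact ((idealRed_exact_iff J (d j) (d (j + 1))).1 (h1 j hj) x).1 hx
  -- the cokernel and its mod-`J` reduction
  set Q := F (k + 1) ⧸ LinearMap.range (d k) with hQdef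
  set Q1 := Q ⧸ (J • ⊤ : Submodule B Q) with hQ1def
  haveI hQfin : Module.Finite B Q := Module.Finite.quotient B _
  haveI hQ1fin : Module.Finite B Q1 := Module.Finite.quotient B _
  haveI htower : IsScalarTower B (B ⧸ J) Q1 :=
    (Module.isTorsionBySet_quotient_ideal_smul Q J).isScalarTower
  have hmk_smul : ∀ (r : B) (x : Q1), (Ideal.Quotient.mk J r) • x = r • x := fun r x =>
    Module.IsTorsionBySet.mk_smul (Module.isTorsionBySet_quotient_ideal_smul Q J) r x
  haveI hQ1fin' : Module.Finite (B ⧸ J) Q1 :=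
    Module.Finite.of_restrictScalars_finite B _ _
  -- a basis of `Q1` over `B ⧸ J`
  set ι := Module.Free.ChooseBasisIndex (B ⧸ J) Q1 with hiota
  set b : Module.Basis ι (B ⧸ J) Q1 := Module.Free.chooseBasis (B ⧸ J) Q1 with hbdef
  -- the projection θ
  set θ : F (k + 1) →ₗ[B] Q1 :=
    (Submodule.mkQ (J • ⊤ : Submodule B Q)) ∘ₗ (Submodule.mkQ (LinearMap.range (d k))) with hθ
  have hθsurj : Function.Surjective θ := by
    intro y
    obtain ⟨q, rfl⟩ := Submodule.Quotient.mk_surjective _ y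
    obtain ⟨x, rfl⟩ := Submodule.Quotient.mk_surjective _ q
    exact ⟨x, rfl⟩
  -- lifts of the basis vectors
  have hlifts : ∀ i : ι, ∃ x : F (k + 1), θ x = b i := fun i => hθsurj (b i)
  choose lifts hlifts' using hlifts
  -- the map e
  set e : (ι → B) →ₗ[B] F (k + 1) := Fintype.linearCombination B lifts with hedef
  have he_apply : ∀ v : ι → B, e v = ∑ i, v i • lifts i := fun v => rfl
  have hθe : ∀ v : ι → B, θ (e v) = ∑ i, v i • b i := by
    intro v
    rw [he_apply, map_sum]
    refine Finset.sum_congr rfl fun i _ => ?_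
    rw [map_smul, hlifts']
  have hrepr : ∀ (v : ι → B) (i : ι), b.repr (θ (e v)) i = Ideal.Quotient.mk J (v i) := by
    intro v i
    rw [hθe]
    have hsm : (∑ t, v t • b t) = ∑ t, (Ideal.Quotient.mk J (v t)) • b t :=
      Finset.sum_congr rfl fun t _ => (hmk_smul (v t) (b t)).symm
    rw [hsm, map_sum]
    simp only [map_smul, Module.Basis.repr_self, Finsupp.smul_single, smul_eq_mul, mul_one]
    rw [Finsupp.finset_sum_apply]
    simp [Finsupp.single_apply]
  -- construction of φ
  set βF : Module.Basis (Module.Free.ChooseBasisIndex B (F (k + 1))) B (F (k + 1)) :=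
    Module.Free.chooseBasis B (F (k + 1)) with hβF
  have hwex : ∀ (t) (i : ι), ∃ r : B, Ideal.Quotient.mk J r = b.repr (θ (βF t)) i :=
    fun t i => Ideal.Quotient.mk_surjective _
  choose w hwspec using hwex
  set φ : F (k + 1) →ₗ[B] (ι → B) := βF.constr ℕ w with hφ
  set mkPi : (ι → B) →ₗ[B] (ι → B ⧸ J) :=
    LinearMap.pi (fun i => (Algebra.linearMap B (B ⧸ J)).comp (LinearMap.proj i)) with hmkPi
  set L2 : F (k + 1) →ₗ[B] (ι → B ⧸ J) :=
    (Finsupp.linearEquivFunOnFinite B (B ⧸ J) ι).toLinearMap ∘ₗ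
      ((b.repr.restrictScalars B).toLinearMap) ∘ₗ θ with hL2
  have hL2apply : ∀ (x : F (k + 1)) (i : ι), L2 x i = b.repr (θ x) i := fun x i => rfl
  have hLeq : mkPi ∘ₗ φ = L2 := by
    refine Module.Basis.ext βF fun t => ?_
    funext i
    have h1' : (mkPi ∘ₗ φ) (βF t) i = Ideal.Quotient.mk J (w t i) := by
      simp [hmkPi, hφ, Module.Basis.constr_basis]
    rw [h1', hL2apply, hwspec]
  have φspec : ∀ (x : F (k + 1)) (i : ι), Ideal.Quotient.mk J (φ x i) = b.repr (θ x) i := by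
    intro x i
    have := congrFun (LinearMap.congr_fun hLeq x) i
    simpa [hmkPi, hL2apply] using this
  -- key properties of φ
  have hθd : ∀ y : F k, θ (d k y) = 0 := by
    intro y
    have h0 : Submodule.mkQ (LinearMap.range (d k)) (d k y) = 0 :=
      (Submodule.Quotient.mk_eq_zero _).2 ⟨y, rfl⟩
    show Submodule.mkQ (J • ⊤ : Submodule B Q) (Submodule.mkQ (LinearMap.range (d k)) (d k y)) = 0
    rw [h0, map_zero]
  have φ1 : ∀ y : F k, φ (d k y) ∈ (J • ⊤ : Submodule B (ι → B)) := by
    intro y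
    rw [mem_smulTop_pi_iff]
    intro i
    rw [← Ideal.Quotient.eq_zero_iff_mem, φspec, hθd, map_zero]
    rfl
  have φ2 : ∀ v : ι → B, φ (e v) - v ∈ (J • ⊤ : Submodule B (ι → B)) := by
    intro v
    rw [mem_smulTop_pi_iff]
    intro i
    rw [← Ideal.Quotient.eq_zero_iff_mem]
    have : Ideal.Quotient.mk J ((φ (e v) - v) i) =
        Ideal.Quotient.mk J (φ (e v) i) - Ideal.Quotient.mk J (v i) := by
      rw [Pi.sub_apply, map_sub]
    rw [this, φspec, hrepr, sub_self]
  -- mod-J reduction detects range ⊔ J•⊤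
  have hmodJ : ∀ (c : ℕ) (z : F (k + 1)),
      z ∈ LinearMap.range (d k) ⊔ (J ^ c • ⊤ : Submodule B (F (k + 1))) ↔
      Submodule.mkQ (LinearMap.range (d k)) z ∈ (J ^ c • ⊤ : Submodule B Q) := by
    intro c z
    rw [mkQ_mem_smulTop_iff]
  have hT1 : ∀ x : F (k + 1),
      x - (e ∘ₗ φ) x ∈ LinearMap.range (d k) ⊔ (J • ⊤ : Submodule B (F (k + 1))) := by
    intro x
    have hpow : (J • ⊤ : Submodule B (F (k + 1))) = (J ^ 1 • ⊤ : Submodule B (F (k + 1))) := by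
      rw [pow_one]
    rw [hpow, hmodJ 1]
    have hθ0 : θ (x - e (φ x)) = 0 := by
      have h1' : θ (e (φ x)) = ∑ i, b.repr (θ x) i • b i := by
        rw [hθe]
        refine Finset.sum_congr rfl fun i _ => ?_
        rw [← hmk_smul, φspec]
      rw [map_sub, h1', Module.Basis.sum_repr, sub_self]
    have : Submodule.mkQ (J • ⊤ : Submodule B Q)
        (Submodule.mkQ (LinearMap.range (d k)) (x - e (φ x))) = 0 := hθ0
    rw [Submodule.mkQ_apply, Submodule.Quotient.mk_eq_zero] at this
    rw [pow_one]
    exact this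
  have hT2 : ∀ y : F k, (e ∘ₗ φ) (d k y) ∈ (J • ⊤ : Submodule B (F (k + 1))) := by
    intro y
    exact mem_smulTop_map J e (φ1 y)
  -- the projection π and its surjectivity
  set π : (ι → B) →ₗ[B] Q := (Submodule.mkQ (LinearMap.range (d k))) ∘ₗ e with hπ
  have hθπ : ∀ v : ι → B, Submodule.mkQ (J • ⊤ : Submodule B Q) (π v) = θ (e v) := fun v => rfl
  have hπsup : ⊤ ≤ LinearMap.range π ⊔ (J • ⊤ : Submodule B Q) := by
    intro q _
    have hcex : ∀ i : ι, ∃ r : B,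
        Ideal.Quotient.mk J r = b.repr (Submodule.mkQ (J • ⊤ : Submodule B Q) q) i :=
      fun i => Ideal.Quotient.mk_surjective _
    choose c hc using hcex
    have hmkc : Submodule.mkQ (J • ⊤ : Submodule B Q) (π c) =
        Submodule.mkQ (J • ⊤ : Submodule B Q) q := by
      rw [hθπ, hθe]
      have h1' : (∑ i, c i • b i) = ∑ i, b.repr (Submodule.mkQ (J • ⊤ : Submodule B Q) q) i • b i := by
        refine Finset.sum_congr rfl fun i _ => ?_
        rw [← hc, hmk_smul]
      rw [h1', Module.Basis.sum_repr]
    have : q - π c ∈ (J • ⊤ : Submodule B Q) := by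
      rw [← Submodule.Quotient.mk_eq_zero (J • ⊤ : Submodule B Q)]
      have : Submodule.mkQ (J • ⊤ : Submodule B Q) (q - π c) = 0 := by
        rw [map_sub, hmkc, sub_self]
      exact this
    exact Submodule.mem_sup.2 ⟨π c, ⟨c, rfl⟩, q - π c, this, by abel⟩
  have hJjac : J ≤ Ideal.jacobson ⊥ :=
    hJm.trans (IsLocalRing.jacobson_eq_maximalIdeal ⊥ bot_ne_top).ge
  have hπsurj : Function.Surjective π := by
    rw [← LinearMap.range_eq_top]
    refine le_antisymm le_top ?_
    exact Submodule.le_of_le_smul_of_le_jacobson_bot Module.Finite.fg_top hJjac hπsup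
  -- approximate contracting homotopy
  have H := homAux J F d k (e ∘ₗ φ) hdd hE1 hT1 hT2
  have hdd' : ∀ (j : ℤ) (y : F j), d (j + 1) (d j y) = 0 := by
    intro j y
    have := LinearMap.congr_fun (hdd j) y
    simpa using this
  -- the key induction on n
  have key : ∀ n : ℕ, 1 ≤ n →
      (∀ j, j < k → ∀ x : F (j + 1),
        d (j + 1) x ∈ (J ^ n • ⊤ : Submodule B (F (j + 1 + 1))) →
        x ∈ LinearMap.range (d j) ⊔ (J ^ n • ⊤ : Submodule B (F (j + 1)))) ∧
      (∀ v : ι → B,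
        e v ∈ LinearMap.range (d k) ⊔ (J ^ n • ⊤ : Submodule B (F (k + 1))) →
        v ∈ (J ^ n • ⊤ : Submodule B (ι → B))) := by
    intro n hn
    induction n with
    | zero => omega
    | succ n ih =>
      rcases Nat.eq_zero_or_pos n with rfl | hn'
      · -- base case n + 1 = 1
        constructor
        · intro j hj x hx
          rw [pow_one] at hx ⊢
          exact hE1 j hj x hx
        · intro v hv
          rw [pow_one] at hv ⊢
          obtain ⟨y, ⟨z, rfl⟩, u, hu, hxu⟩ := Submodule.mem_sup.1 hv
          have hφe : φ (e v) = φ (d k z) + φ u := by rw [← map_add, hxu]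
          have h1' : φ (d k z) ∈ (J • ⊤ : Submodule B (ι → B)) := φ1 z
          have h2' : φ u ∈ (J • ⊤ : Submodule B (ι → B)) := mem_smulTop_map J φ hu
          have h3' : φ (e v) - v ∈ (J • ⊤ : Submodule B (ι → B)) := φ2 v
          have : v = φ (d k z) + φ u - (φ (e v) - v) := by rw [← hφe]; abel
          rw [this]
          exact Submodule.sub_mem _ (Submodule.add_mem _ h1' h2') h3'
      · -- inductive step
        obtain ⟨ihE, ihI⟩ := ih hn'
        have hwk : ∀ (i : ℤ), (J ^ (n + 1) • ⊤ : Submodule B (F i)) ≤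
            (J ^ n • ⊤ : Submodule B (F i)) :=
          fun i => Submodule.smul_mono_left (Ideal.pow_le_pow_right (Nat.le_succ n))
        constructor
        · intro j hj x hx
          obtain ⟨y0, ⟨y, rfl⟩, u, hu, hxu⟩ := Submodule.mem_sup.1 (ihE j hj x (hwk _ hx))
          have hdu : d (j + 1) u ∈ (J ^ (n + 1) • ⊤ : Submodule B (F (j + 1 + 1))) := by
            have : d (j + 1) u = d (j + 1) x := by
              rw [← hxu, map_add, hdd' j y, zero_add]
            rw [this]; exact hx
          obtain ⟨g, R, p1, p2, p3⟩ := H j hj.le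
          set L : F (j + 1) →ₗ[B] F (j + 1) := (d j) ∘ₗ g + R - LinearMap.id with hLdef
          have hLapp : ∀ z : F (j + 1), L z = d j (g z) + R z - z := fun z => rfl
          have hLmem : ∀ z : F (j + 1), L z ∈ (J • ⊤ : Submodule B (F (j + 1))) := by
            intro z; rw [hLapp]; exact p1 z
          have hLu : L u ∈ (J ^ (n + 1) • ⊤ : Submodule B (F (j + 1))) := by
            have := apply_mem_smulTop_mul L hLmem hu
            rwa [← pow_succ] at this
          have hRu : R u ∈ (J ^ (n + 1) • ⊤ : Submodule B (F (j + 1))) := p3 hj (n + 1) u hdu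
          have hxeq : x = d j (y + g u) + (R u - L u) := by
            have hL' : L u = d j (g u) + R u - u := hLapp u
            rw [hL', map_add, ← hxu]
            abel
          rw [hxeq]
          exact Submodule.mem_sup.2 ⟨d j (y + g u), ⟨y + g u, rfl⟩, R u - L u,
            Submodule.sub_mem _ hRu hLu, rfl⟩
        · intro v hv
          have hvn : v ∈ (J ^ n • ⊤ : Submodule B (ι → B)) := by
            refine ihI v ?_
            refine (sup_le_sup_left (hwk _) _ : _) hv
          obtain ⟨y0, ⟨z, rfl⟩, y, hy, hxu⟩ := Submodule.mem_sup.1 hv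
          -- rewrite d k z = d k u with u ∈ J^n • ⊤ using exactness one step below
          have hk1 : k - 1 + 1 = k := by ring
          have hdz : d k z ∈ (J ^ n • ⊤ : Submodule B (F (k + 1))) := by
            have hev : e v ∈ (J ^ n • ⊤ : Submodule B (F (k + 1))) :=
              mem_smulTop_map _ e hvn
            have : d k z = e v - y := by rw [← hxu]; abel
            rw [this]
            exact Submodule.sub_mem _ hev (hwk _ hy)
          set z' : F (k - 1 + 1) := (fcast B F hk1).symm z with hz'
          have hdz' : d (k - 1 + 1) z' ∈ (J ^ n • ⊤ : Submodule B (F (k - 1 + 1 + 1))) := by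
            have hcd : d k ((fcast B F hk1) z') = (fcast B F (by rw [hk1])) (d (k - 1 + 1) z') :=
              fcast_d B F d hk1 z'
            have hzz : (fcast B F hk1) z' = z := by rw [hz']; simp
            rw [hzz] at hcd
            have h2' : d (k - 1 + 1) z' =
                (fcast B F (show k - 1 + 1 + 1 = k + 1 by rw [hk1])).symm (d k z) := by
              rw [hcd]; simp
            rw [h2']
            exact fcast_symm_mem_smulTop B F (J ^ n) _ hdz
          obtain ⟨w0, ⟨w', rfl⟩, u', hu', hzu⟩ :=
            Submodule.mem_sup.1 (ihE (k - 1) (by omega) z' hdz')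
          have hdkz : d k z = d k ((fcast B F hk1) u') := by
            have hz2 : z = (fcast B F hk1) (d (k - 1) w') + (fcast B F hk1) u' := by
              rw [← map_add, hzu, hz']; simp
            rw [hz2, map_add]
            have : d k ((fcast B F hk1) (d (k - 1) w')) =
                (fcast B F (by rw [hk1])) (d (k - 1 + 1) (d (k - 1) w')) :=
              fcast_d B F d hk1 _
            rw [this, hdd' (k - 1) w', map_zero, zero_add]
          set u : F k := (fcast B F hk1) u' with hudef
          have hum : u ∈ (J ^ n • ⊤ : Submodule B (F k)) := fcast_mem_smulTop B F _ hk1 hu'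
          -- now conclude
          have hφev : φ (e v) = (φ ∘ₗ (d k)) u + φ y := by
            rw [← hxu, map_add, hdkz]; rfl
          have hφd : ∀ x0 : F k, (φ ∘ₗ (d k)) x0 ∈ (J • ⊤ : Submodule B (ι → B)) :=
            fun x0 => φ1 x0
          have h1' : (φ ∘ₗ (d k)) u ∈ (J ^ (n + 1) • ⊤ : Submodule B (ι → B)) := by
            have := apply_mem_smulTop_mul (φ ∘ₗ (d k)) hφd hum
            rwa [← pow_succ] at this
          have h2' : φ y ∈ (J ^ (n + 1) • ⊤ : Submodule B (ι → B)) := mem_smulTop_map _ φ hy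
          have h3' : φ (e v) - v ∈ (J ^ (n + 1) • ⊤ : Submodule B (ι → B)) := by
            set E : (ι → B) →ₗ[B] (ι → B) := φ ∘ₗ e - LinearMap.id with hE
            have hEmem : ∀ w1 : ι → B, E w1 ∈ (J • ⊤ : Submodule B (ι → B)) := fun w1 => φ2 w1
            have := apply_mem_smulTop_mul E hEmem hvn
            rwa [← pow_succ] at this
          have : v = ((φ ∘ₗ (d k)) u + φ y) - (φ (e v) - v) := by rw [← hφev]; abel
          rw [this]
          exact Submodule.sub_mem _ (Submodule.add_mem _ h1' h2') h3'
  -- Final assembly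
  have hπinj : Function.Injective π := by
    rw [← LinearMap.ker_eq_bot]
    refine (Submodule.eq_bot_iff _).2 fun v hv => ?_
    have hev : e v ∈ LinearMap.range (d k) := by
      have h0 : Submodule.mkQ (LinearMap.range (d k)) (e v) = 0 := hv
      rwa [Submodule.mkQ_apply, Submodule.Quotient.mk_eq_zero] at h0
    have hvm : ∀ n : ℕ, 1 ≤ n → v ∈ (J ^ n • ⊤ : Submodule B (ι → B)) := fun n hn =>
      (key n hn).2 v (Submodule.mem_sup_left hev)
    funext i
    refine krull_fg (B := B) (M := B) (v i) fun n => ?_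
    rcases n with _ | n
    · rw [pow_zero, Ideal.one_eq_top, Submodule.top_smul]; trivial
    · have h1' : v i ∈ J ^ (n + 1) :=
        (mem_smulTop_pi_iff _ v).1 (hvm (n + 1) (by omega)) i
      have h2' : (J ^ (n + 1) : Ideal B) ≤ (maximalIdeal B) ^ (n + 1) • ⊤ := by
        intro a ha
        have : (maximalIdeal B) ^ (n + 1) • (⊤ : Submodule B B) = (maximalIdeal B) ^ (n + 1) := by
          rw [Ideal.smul_top_eq_map]
          ext t
          simp [Submodule.mem_map, Submodule.restrictScalars_mem]
        rw [this]
        exact Ideal.pow_right_mono hJm (n + 1) ha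
      exact h2' h1'
  have hQfree : Module.Free B Q := by
    have equivπ : (ι → B) ≃ₗ[B] Q := LinearEquiv.ofBijective π ⟨hπinj, hπsurj⟩
    exact Module.Free.of_equiv equivπ
  refine ⟨?_, ?_, ?_, hQfree⟩
  · -- the mod-(I n) statements
    intro n hn
    rw [hIn n]
    refine ⟨?_, ?_, ?_⟩
    · intro j hj
      refine (idealRed_exact_iff _ _ _).2 fun x => ⟨?_, ?_⟩
      · intro hx
        exact (key n hn).1 j hj x hx
      · intro hx
        obtain ⟨y0, ⟨y, rfl⟩, u, hu, hxu⟩ := Submodule.mem_sup.1 hx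
        have : d (j + 1) x = d (j + 1) u := by
          rw [← hxu, map_add, hdd' j y, zero_add]
        rw [this]
        exact mem_smulTop_map _ (d (j + 1)) hu
    · refine (idealRed_exact_iff _ _ _).2 fun x => ?_
      exact (hmodJ n x).symm
    · -- freeness of the reduced cokernel
      set mkPin : (ι → B) →ₗ[B] (ι → B ⧸ (J ^ n : Ideal B)) :=
        LinearMap.pi (fun i => (Algebra.linearMap B (B ⧸ (J ^ n : Ideal B))).comp
          (LinearMap.proj i)) with hmkPin
      have hker : (J ^ n • ⊤ : Submodule B (ι → B)) ≤ LinearMap.ker mkPin := by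
        intro v hv
        rw [LinearMap.mem_ker]
        funext i
        have : v i ∈ (J ^ n : Ideal B) := (mem_smulTop_pi_iff _ v).1 hv i
        simpa [hmkPin] using Ideal.Quotient.eq_zero_iff_mem.2 this
      set μ : ((ι → B) ⧸ (J ^ n • ⊤ : Submodule B (ι → B))) →ₗ[B]
          (ι → B ⧸ (J ^ n : Ideal B)) := Submodule.liftQ _ mkPin hker with hμ
      have hμsurj : Function.Surjective μ := by
        intro wq
        have : ∀ i, ∃ r : B, Ideal.Quotient.mk (J ^ n) r = wq i :=
          fun i => Ideal.Quotient.mk_surjective _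
        choose r hr using this
        refine ⟨Submodule.Quotient.mk r, ?_⟩
        have : μ (Submodule.Quotient.mk r) = mkPin r := rfl
        rw [this]
        funext i
        simpa [hmkPin] using hr i
      have hμinj : Function.Injective μ := by
        rw [← LinearMap.ker_eq_bot]
        refine (Submodule.eq_bot_iff _).2 fun vq hvq => ?_
        obtain ⟨v, rfl⟩ := Submodule.Quotient.mk_surjective _ vq
        have h0 : mkPin v = 0 := hvq
        have : ∀ i, v i ∈ (J ^ n : Ideal B) := by
          intro i
          have := congrFun h0 i
          simpa [hmkPin, Ideal.Quotient.eq_zero_iff_mem] using this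
        rw [Submodule.Quotient.mk_eq_zero]
        exact (mem_smulTop_pi_iff _ v).2 this
      set ρ : ((ι → B) ⧸ (J ^ n • ⊤ : Submodule B (ι → B))) →ₗ[B]
          (Q ⧸ (J ^ n • ⊤ : Submodule B Q)) := idealRed (J ^ n) π with hρ
      have hρsurj : Function.Surjective ρ := by
        intro qq
        obtain ⟨q, rfl⟩ := Submodule.Quotient.mk_surjective _ qq
        obtain ⟨v, rfl⟩ := hπsurj q
        exact ⟨Submodule.Quotient.mk v, idealRed_mk _ _ _⟩
      have hρinj : Function.Injective ρ := by
        rw [← LinearMap.ker_eq_bot]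
        refine (Submodule.eq_bot_iff _).2 fun vq hvq => ?_
        obtain ⟨v, rfl⟩ := Submodule.Quotient.mk_surjective _ vq
        have h0 : ρ (Submodule.Quotient.mk v) = 0 := hvq
        rw [hρ, idealRed_mk, Submodule.Quotient.mk_eq_zero] at h0
        have hπv : Submodule.mkQ (LinearMap.range (d k)) (e v) ∈
            (J ^ n • ⊤ : Submodule B Q) := h0
        have hev : e v ∈ LinearMap.range (d k) ⊔ (J ^ n • ⊤ : Submodule B (F (k + 1))) :=
          (hmodJ n (e v)).2 hπv
        rw [Submodule.Quotient.mk_eq_zero]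
        exact (key n hn).2 v hev
      set ζ : (ι → B ⧸ (J ^ n : Ideal B)) →ₗ[B] (Q ⧸ (J ^ n • ⊤ : Submodule B Q)) :=
        ρ ∘ₗ ((LinearEquiv.ofBijective μ ⟨hμinj, hμsurj⟩).symm :
          (ι → B ⧸ (J ^ n : Ideal B)) ≃ₗ[B] _).toLinearMap with hζ
      have hζbij : Function.Bijective ζ := by
        refine ⟨hρinj.comp (LinearEquiv.injective _), hρsurj.comp (LinearEquiv.surjective _)⟩
      refine free_of_bijective_of_mk_smul (J ^ n) ?_ ?_ ζ hζbij
      · intro r x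
        funext i
        rw [Pi.smul_apply, Pi.smul_apply, smul_eq_mul, Algebra.smul_def,
          Ideal.Quotient.algebraMap_eq]
      · intro r x
        exact Module.IsTorsionBySet.mk_smul
          (Module.isTorsionBySet_quotient_ideal_smul Q (J ^ n)) r x
  · -- exactness of the original complex
    intro j hj
    rw [LinearMap.exact_iff]
    refine le_antisymm ?_ ?_
    · intro x hx
      refine mem_of_forall_mem_sup_smulTop hJm (LinearMap.range (d j)) x fun n hn => ?_
      refine (key n hn).1 j hj x ?_
      rw [LinearMap.mem_ker.1 hx]
      exact Submodule.zero_mem _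
    · rintro _ ⟨y, rfl⟩
      exact LinearMap.mem_ker.2 (hdd' j y)
  · exact LinearMap.exact_iff.mpr (Submodule.ker_mkQ _)
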